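/- Let u₁ and u₂ be nonzero Laurent polynomials over ℂ having symmetry with types ε₁ z^{c₁} and ε₂ z^{c₂}, and let r be a greatest common divisor of u₁ and u₂ having symmetry. Then there exists a strongly invertible 2×2 matrix P of Laurent polynomials, all of whose entries have symmetry, such that P(z)·(u₁(z), u₂(z))ᵀ = (r(z), 0)ᵀ, and the entries of P admit symmetry types satisfying (type of P_{j,1})·ε₁z^{c₁} = (type of P_{j,2})·ε₂z^{c₂} for j = 1, 2 (so that, in particular, P has compatible symmetry). -/

import Mathlib

open LaurentPolynomial Matrix
open scoped Classical

noncomputable section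

abbrev LP := LaurentPolynomial ℂ

namespace QT

/-- The coefficient of `z^k` in a Laurent polynomial. -/
def coeff (u : LP) (k : ℤ) : ℂ := (AddMonoidAlgebra.coeff u) k

/-- The Hermitian conjugate `u⋆(z) = Σ conj(u(k)) z^{-k}`. -/
def hstar (u : LP) : LP :=
  AddMonoidAlgebra.ofCoeff
    (Finsupp.mapDomain (fun k => -k)
      (Finsupp.mapRange (starRingEnd ℂ) (map_zero _) (AddMonoidAlgebra.coeff u)))

/-- `u` has symmetry with type `ε z^c`, i.e. `u(k) = ε u(c-k)` for all `k`. -/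
def SymT (u : LP) (ε : ℂ) (c : ℤ) : Prop := ∀ k : ℤ, coeff u k = ε * coeff u (c - k)

def Sgn (ε : ℂ) : Prop := ε = 1 ∨ ε = -1

/-- `u` has symmetry (with some type). -/
def HasSym (u : LP) : Prop := ∃ ε c, Sgn ε ∧ SymT u ε c

/-- The Laurent polynomial `z - a`. -/
def zsub (a : ℂ) : LP := T 1 - LaurentPolynomial.C a

/-- `m` is the multiplicity of `z₀` as a zero of `u`. -/
def mzIs (u : LP) (z₀ : ℂ) (m : ℕ) : Prop := zsub z₀ ^ m ∣ u ∧ ¬ zsub z₀ ^ (m + 1) ∣ u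

/-- The multiplicity of `z₀` as a zero of `u`, as a function. -/
def mzF (u : LP) (z₀ : ℂ) : ℕ := sSup {m : ℕ | zsub z₀ ^ m ∣ u}

/-- The difference-of-(Hermitian)-squares property with respect to symmetry type `ε z^c`. -/
def DOS (u : LP) (ε : ℂ) (c : ℤ) : Prop :=
  ∃ (u₁ u₂ : LP) (ε₁ ε₂ : ℂ) (c₁ c₂ : ℤ),
    Sgn ε₁ ∧ Sgn ε₂ ∧ SymT u₁ ε₁ c₁ ∧ SymT u₂ ε₂ c₂ ∧
    u₁ * hstar u₁ - u₂ * hstar u₂ = u ∧ ε₁ * ε₂ = ε ∧ c₁ - c₂ = c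

/-- Degree: the largest exponent with nonzero coefficient (0 for the zero polynomial). -/
def degL (u : LP) : ℤ :=
  if h : u = 0 then 0
  else (AddMonoidAlgebra.coeff u).support.max'
    (Finsupp.support_nonempty_iff.mpr (AddMonoidAlgebra.coeff_eq_zero.not.mpr h))

/-- Lower degree: the smallest exponent with nonzero coefficient (0 for zero). -/
def ldegL (u : LP) : ℤ :=
  if h : u = 0 then 0
  else (AddMonoidAlgebra.coeff u).support.min'
    (Finsupp.support_nonempty_iff.mpr (AddMonoidAlgebra.coeff_eq_zero.not.mpr h))

/-- Length `deg - ldeg`, with `len 0 = ⊥`. -/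
def lenL (u : LP) : WithBot ℤ := if u = 0 then ⊥ else ((degL u - ldegL u : ℤ) : WithBot ℤ)

/-- `g` is a greatest common divisor of `a` and `b`. -/
def IsGCD2 (g a b : LP) : Prop := g ∣ a ∧ g ∣ b ∧ ∀ e : LP, e ∣ a → e ∣ b → e ∣ g

/-- `g` is a greatest common divisor of `a`, `b`, `c`, `d`. -/
def IsGCD4 (g a b c d : LP) : Prop :=
  g ∣ a ∧ g ∣ b ∧ g ∣ c ∧ g ∣ d ∧ ∀ e : LP, e ∣ a → e ∣ b → e ∣ c → e ∣ d → e ∣ g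

/-- The Hermitian conjugate transpose of a matrix of Laurent polynomials. -/
def hstarM (A : Matrix (Fin 2) (Fin 2) LP) : Matrix (Fin 2) (Fin 2) LP :=
  fun i j => hstar (A j i)

def IsHerm (A : Matrix (Fin 2) (Fin 2) LP) : Prop := hstarM A = A

/-- `diag(1, -1)`. -/
def Jmat : Matrix (Fin 2) (Fin 2) LP := Matrix.diagonal ![1, -1]

/-- A square matrix of Laurent polynomials is strongly invertible if its determinant is a
nonzero monomial. -/
def StrongInv (A : Matrix (Fin 2) (Fin 2) LP) : Prop :=
  ∃ (lam : ℂ) (k : ℤ), lam ≠ 0 ∧ A.det = LaurentPolynomial.C lam * T k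

/-- Compatible symmetry for a `2×2` matrix of Laurent polynomials. -/
def CompatSym (A : Matrix (Fin 2) (Fin 2) LP) : Prop :=
  ∃ (ε ε' : Fin 2 → ℂ) (c c' : Fin 2 → ℤ),
    (∀ j, Sgn (ε j)) ∧ (∀ k, Sgn (ε' k)) ∧
    ∀ j k, SymT (A j k) (ε j * ε' k) (c' k - c j)

/-- Substitution `z ↦ z²`. -/
def sqDom (u : LP) : LP :=
  AddMonoidAlgebra.ofCoeff (Finsupp.mapDomain (fun k => 2 * k) (AddMonoidAlgebra.coeff u))

/-- Substitution `z ↦ -z`. -/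
def negSub (u : LP) : LP :=
  (AddMonoidAlgebra.coeff u).sum fun k c =>
    (AddMonoidAlgebra.ofCoeff (Finsupp.single k ((-1 : ℂ) ^ k * c)) : LP)

/-- The `γ`-coset `u^{[γ]}(z) = Σ_k u(γ + 2k) z^k`. -/
def cosetL (u : LP) (γ : ℤ) : LP :=
  AddMonoidAlgebra.ofCoeff
    (Finsupp.comapDomain (fun k : ℤ => γ + 2 * k) (AddMonoidAlgebra.coeff u)
      (by intro a _ b _ h; simp only at h; omega))

/-- Evaluation of a Laurent polynomial at a point. -/
def evalL (u : LP) (z : ℂ) : ℂ := (AddMonoidAlgebra.coeff u).sum fun k c => c * z ^ k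

/-- `{a; b₁, b₂}_{Θ,(1,-1)}` is a quasi-tight framelet filter bank. -/
def QTFB (a Θ b₁ b₂ : LP) : Prop :=
  sqDom Θ * hstar a * a + hstar b₁ * b₁ - hstar b₂ * b₂ = Θ ∧
  sqDom Θ * hstar a * negSub a + hstar b₁ * negSub b₁ - hstar b₂ * negSub b₂ = 0

/-- The matrix `N_{a,Θ|n_b}` built from the quotients `A`, `B`. -/
def Nmat (A B : LP) : Matrix (Fin 2) (Fin 2) LP :=
  LaurentPolynomial.C (2 : ℂ)⁻¹ •
    !![cosetL A 0 + cosetL B 0, cosetL A 1 - cosetL B 1;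
       T 1 * (cosetL A 1 + cosetL B 1), cosetL A 0 - cosetL B 0]

/-! ### Auxiliary lemmas for Statement 11 -/

lemma coeff_eq (u : LP) (k : ℤ) : coeff u k = AddMonoidAlgebra.coeff u k := rfl

lemma symT_iff (u : LP) (ε : ℂ) (c : ℤ) :
    SymT u ε c ↔ u = LaurentPolynomial.C ε * (T c * invert u) := by
  have key : ∀ k : ℤ, AddMonoidAlgebra.coeff ((LaurentPolynomial.C ε * (T c * invert u) : LP)) k = ε * AddMonoidAlgebra.coeff u (c - k) := by
    intro k
    rw [← mul_assoc, ← single_eq_C_mul_T, AddMonoidAlgebra.coeff_single_mul_apply, invert_apply]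
    ring_nf
  constructor
  · intro h
    exact AddMonoidAlgebra.coeff_injective <| Finsupp.ext fun k => by rw [key k]; exact h k
  · intro h k
    rw [coeff_eq, coeff_eq]
    conv_lhs => rw [h]
    exact key k

lemma Sgn.mul_self {ε : ℂ} (h : Sgn ε) : ε * ε = 1 := by
  rcases h with h | h <;> simp [h]

lemma Sgn.mul {ε δ : ℂ} (h : Sgn ε) (h' : Sgn δ) : Sgn (ε * δ) := by
  rcases h with h | h <;> rcases h' with h' | h' <;> simp [h, h', Sgn]

lemma sym_invert {u : LP} {ε : ℂ} {c : ℤ} (h : SymT u ε c) :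
    invert u = LaurentPolynomial.C ε * (T (-c) * u) := by
  have := congrArg invert ((symT_iff u ε c).mp h)
  simpa [_root_.map_mul, invert_C, invert_T, involutive_invert u] using this

lemma symT_neg {u : LP} {ε : ℂ} {c : ℤ} (h : SymT u ε c) : SymT (-u) ε c := by
  rw [symT_iff] at h ⊢
  rw [map_neg]
  linear_combination -h

lemma C_two_inv_mul_two : LaurentPolynomial.C (2⁻¹ : ℂ) * 2 = 1 := by
  rw [show ((2 : LP)) = LaurentPolynomial.C (2 : ℂ) from (map_ofNat _ 2).symm, ← _root_.map_mul]
  norm_num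

lemma symmetrize_sym (a : LP) (σ : ℂ) (hσ : Sgn σ) (d : ℤ) :
    SymT (LaurentPolynomial.C (2⁻¹ : ℂ) *
      (a + LaurentPolynomial.C σ * (T (-d) * invert a))) σ (-d) := by
  rw [symT_iff]
  have hinv : invert (LaurentPolynomial.C (2⁻¹ : ℂ) *
      (a + LaurentPolynomial.C σ * (T (-d) * invert a))) =
      LaurentPolynomial.C (2⁻¹ : ℂ) * (invert a + LaurentPolynomial.C σ * (T d * a)) := by
    simp [_root_.map_mul, map_add, invert_C, invert_T, involutive_invert a]
  rw [hinv]
  have hσσ : LaurentPolynomial.C σ * LaurentPolynomial.C σ = 1 := by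
    rw [← _root_.map_mul, hσ.mul_self, _root_.map_one]
  have hTT : T (-d) * T d = (1 : LP) := by
    rw [← T_add]; simp
  linear_combination (-(LaurentPolynomial.C (2⁻¹ : ℂ) * a * (T (-d) * T d))) * hσσ +
    (-(LaurentPolynomial.C (2⁻¹ : ℂ) * a)) * hTT

/-- reducing a symmetric vector to `(gcd, 0)ᵀ` by a strongly invertible
matrix with compatible symmetry (Lemma 3.9 of the paper). -/
theorem gcd_vector_reduction_with_symmetry
    (u₁ u₂ r : LP) (hu₁ : u₁ ≠ 0) (hu₂ : u₂ ≠ 0)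
    (ε₁ ε₂ : ℂ) (c₁ c₂ : ℤ) (hε₁ : Sgn ε₁) (hε₂ : Sgn ε₂)
    (hs₁ : SymT u₁ ε₁ c₁) (hs₂ : SymT u₂ ε₂ c₂)
    (hrs : HasSym r) (hgcd : IsGCD2 r u₁ u₂) :
    ∃ (P : Matrix (Fin 2) (Fin 2) LP) (εP : Fin 2 → Fin 2 → ℂ) (cP : Fin 2 → Fin 2 → ℤ),
      StrongInv P ∧ (∀ i j, Sgn (εP i j)) ∧ (∀ i j, SymT (P i j) (εP i j) (cP i j)) ∧
      (∀ j, εP j 0 * ε₁ = εP j 1 * ε₂ ∧ cP j 0 + c₁ = cP j 1 + c₂) ∧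
      P.mulVec ![u₁, u₂] = ![r, 0] := by
  classical
  obtain ⟨εr, cr, hsgr, hsr⟩ := hrs
  have hr : r ≠ 0 := by
    rintro rfl
    exact hu₁ (zero_dvd_iff.mp hgcd.1)
  obtain ⟨v₁, hv₁⟩ := hgcd.1
  obtain ⟨v₂, hv₂⟩ := hgcd.2.1
  -- Bezout identity via polynomials
  obtain ⟨n₁, p₁, hp₁⟩ := exists_T_pow u₁
  obtain ⟨n₂, p₂, hp₂⟩ := exists_T_pow u₂
  set g : Polynomial ℂ := EuclideanDomain.gcd p₁ p₂ with hg
  have hg1 : Polynomial.toLaurent g ∣ u₁ := by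
    have h1 : Polynomial.toLaurent g ∣ u₁ * T (n₁ : ℤ) := by
      rw [← hp₁]
      exact map_dvd _ (EuclideanDomain.gcd_dvd_left p₁ p₂)
    exact ((isUnit_T (n₁ : ℤ)).dvd_mul_right).mp h1
  have hg2 : Polynomial.toLaurent g ∣ u₂ := by
    have h1 : Polynomial.toLaurent g ∣ u₂ * T (n₂ : ℤ) := by
      rw [← hp₂]
      exact map_dvd _ (EuclideanDomain.gcd_dvd_right p₁ p₂)
    exact ((isUnit_T (n₂ : ℤ)).dvd_mul_right).mp h1
  obtain ⟨w, hw⟩ := hgcd.2.2 _ hg1 hg2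
  have hbezL : Polynomial.toLaurent g =
      u₁ * T (n₁ : ℤ) * Polynomial.toLaurent (EuclideanDomain.gcdA p₁ p₂) +
      u₂ * T (n₂ : ℤ) * Polynomial.toLaurent (EuclideanDomain.gcdB p₁ p₂) := by
    conv_lhs => rw [hg, EuclideanDomain.gcd_eq_gcd_ab p₁ p₂]
    rw [map_add, _root_.map_mul, _root_.map_mul, hp₁, hp₂]
  set a : LP := T (n₁ : ℤ) * Polynomial.toLaurent (EuclideanDomain.gcdA p₁ p₂) * w with ha
  set b : LP := T (n₂ : ℤ) * Polynomial.toLaurent (EuclideanDomain.gcdB p₁ p₂) * w with hb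
  have hab : a * u₁ + b * u₂ = r := by
    rw [ha, hb, hw]
    linear_combination (-w) * hbezL
  have habv : a * v₁ + b * v₂ = 1 := by
    apply mul_left_cancel₀ hr
    rw [mul_one]
    linear_combination -a * hv₁ - b * hv₂ + hab
  -- symmetry of the quotients
  set σ₁ : ℂ := ε₁ * εr with hσ₁def
  set σ₂ : ℂ := ε₂ * εr with hσ₂def
  set d₁ : ℤ := c₁ - cr with hd₁def
  set d₂ : ℤ := c₂ - cr with hd₂def
  have hsgσ₁ : Sgn σ₁ := hε₁.mul hsgr
  have hsgσ₂ : Sgn σ₂ := hε₂.mul hsgr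
  have hir : invert r = LaurentPolynomial.C εr * (T (-cr) * r) := sym_invert hsr
  have hCσ₁ : LaurentPolynomial.C σ₁ = LaurentPolynomial.C ε₁ * LaurentPolynomial.C εr := by
    rw [← _root_.map_mul]
  have hCσ₂ : LaurentPolynomial.C σ₂ = LaurentPolynomial.C ε₂ * LaurentPolynomial.C εr := by
    rw [← _root_.map_mul]
  have hTd₁ : (T d₁ : LP) = T c₁ * T (-cr) := by rw [hd₁def, sub_eq_add_neg, T_add]
  have hTd₂ : (T d₂ : LP) = T c₂ * T (-cr) := by rw [hd₂def, sub_eq_add_neg, T_add]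
  have hsv₁ : SymT v₁ σ₁ d₁ := by
    rw [symT_iff]
    apply mul_left_cancel₀ hr
    calc r * v₁ = u₁ := hv₁.symm
      _ = LaurentPolynomial.C ε₁ * (T c₁ * invert u₁) := (symT_iff u₁ ε₁ c₁).mp hs₁
      _ = LaurentPolynomial.C ε₁ * (T c₁ * (invert r * invert v₁)) := by
          rw [hv₁, _root_.map_mul]
      _ = LaurentPolynomial.C ε₁ * (T c₁ *
            ((LaurentPolynomial.C εr * (T (-cr) * r)) * invert v₁)) := by rw [hir]
      _ = r * (LaurentPolynomial.C σ₁ * (T d₁ * invert v₁)) := by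
          rw [hCσ₁, hTd₁]; ring
  have hsv₂ : SymT v₂ σ₂ d₂ := by
    rw [symT_iff]
    apply mul_left_cancel₀ hr
    calc r * v₂ = u₂ := hv₂.symm
      _ = LaurentPolynomial.C ε₂ * (T c₂ * invert u₂) := (symT_iff u₂ ε₂ c₂).mp hs₂
      _ = LaurentPolynomial.C ε₂ * (T c₂ * (invert r * invert v₂)) := by
          rw [hv₂, _root_.map_mul]
      _ = LaurentPolynomial.C ε₂ * (T c₂ *
            ((LaurentPolynomial.C εr * (T (-cr) * r)) * invert v₂)) := by rw [hir]
      _ = r * (LaurentPolynomial.C σ₂ * (T d₂ * invert v₂)) := by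
          rw [hCσ₂, hTd₂]; ring
  -- symmetrized Bezout coefficients
  set a' : LP := LaurentPolynomial.C (2⁻¹ : ℂ) *
      (a + LaurentPolynomial.C σ₁ * (T (-d₁) * invert a)) with ha'
  set b' : LP := LaurentPolynomial.C (2⁻¹ : ℂ) *
      (b + LaurentPolynomial.C σ₂ * (T (-d₂) * invert b)) with hb'
  have hsa' : SymT a' σ₁ (-d₁) := symmetrize_sym a σ₁ hsgσ₁ d₁
  have hsb' : SymT b' σ₂ (-d₂) := symmetrize_sym b σ₂ hsgσ₂ d₂
  have hiv₁ : invert v₁ = LaurentPolynomial.C σ₁ * (T (-d₁) * v₁) := sym_invert hsv₁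
  have hiv₂ : invert v₂ = LaurentPolynomial.C σ₂ * (T (-d₂) * v₂) := sym_invert hsv₂
  have hiab : invert a * invert v₁ + invert b * invert v₂ = 1 := by
    have := congrArg invert habv
    simpa [map_add, _root_.map_mul, _root_.map_one] using this
  have hab' : a' * v₁ + b' * v₂ = 1 := by
    rw [ha', hb']
    linear_combination LaurentPolynomial.C (2⁻¹ : ℂ) * habv +
      LaurentPolynomial.C (2⁻¹ : ℂ) * hiab -
      LaurentPolynomial.C (2⁻¹ : ℂ) * (invert a) * hiv₁ -
      LaurentPolynomial.C (2⁻¹ : ℂ) * (invert b) * hiv₂ + C_two_inv_mul_two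
  -- assemble the matrix
  refine ⟨!![a', b'; -v₂, v₁], ![![σ₁, σ₂], ![σ₂, σ₁]], ![![-d₁, -d₂], ![d₂, d₁]],
    ⟨1, 0, one_ne_zero, ?_⟩, ?_, ?_, ?_, ?_⟩
  · rw [Matrix.det_fin_two_of]
    simp only [_root_.map_one, T_zero, one_mul]
    linear_combination hab'
  · intro i j
    fin_cases i <;> fin_cases j <;> first | exact hsgσ₁ | exact hsgσ₂
  · intro i j
    fin_cases i <;> fin_cases j
    · exact hsa'
    · exact hsb'
    · exact symT_neg hsv₂
    · exact hsv₁
  · have e0 : σ₁ * ε₁ = σ₂ * ε₂ := by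
      rw [hσ₁def, hσ₂def]
      rcases hε₁ with h | h <;> rcases hε₂ with h' | h' <;> rw [h, h'] <;> ring
    have e1 : σ₂ * ε₁ = σ₁ * ε₂ := by rw [hσ₁def, hσ₂def]; ring
    have f0 : -d₁ + c₁ = -d₂ + c₂ := by omega
    have f1 : d₂ + c₁ = d₁ + c₂ := by omega
    intro j
    fin_cases j
    · exact ⟨e0, f0⟩
    · exact ⟨e1, f1⟩
  · funext i
    fin_cases i <;>
      simp only [Matrix.mulVec, dotProduct, Fin.sum_univ_two, Matrix.cons_val',
        Matrix.cons_val_zero, Matrix.cons_val_one, Matrix.head_cons, Matrix.empty_val',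
        Matrix.cons_val_fin_one, Matrix.head_fin_const, Matrix.of_apply, Fin.mk_zero,
        Fin.mk_one, Fin.isValue]
    · linear_combination a' * hv₁ + b' * hv₂ + r * hab'
    · linear_combination (-v₂) * hv₁ + v₁ * hv₂

end QT
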